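/- Let N ≥ 1 be an integer, 0 < β < 1 and Q_A > 0. Suppose {z_n}_{n=1}^N is a sequence of non-negative reals and {y_n}_{n=1}^N is a non-negative, non-decreasing sequence of reals such that z_n ≤ (Q_A / N^β) · Σ_{i=1}^{n−1} z_i / (n − i)^{1−β} + y_n for all 1 ≤ n ≤ N. Then z_n ≤ y_n · (1 + 𝔾_β(Q_A Γ(β))) for all 1 ≤ n ≤ N, where Γ is the Gamma function and 𝔾_β(x) = Σ_{k=0}^∞ x^k / Γ(βk + 1) is the Mittag-Leffler function. -/

import Mathlib

open Real MeasureTheory intervalIntegral Finset Set Filter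



lemma realBeta {p q : ℝ} (hp : 0 < p) (hq : 0 < q) :
    ∫ x in (0:ℝ)..1, x ^ (p-1) * (1-x) ^ (q-1)
      = Real.Gamma p * Real.Gamma q / Real.Gamma (p+q) := by
  have h := Complex.Gamma_mul_Gamma_eq_betaIntegral (s := (p:ℂ)) (t := (q:ℂ))
    (by simpa using hp) (by simpa using hq)
  have hB : Complex.betaIntegral p q
      = ((∫ x in (0:ℝ)..1, x ^ (p-1) * (1-x) ^ (q-1) : ℝ) : ℂ) := by
    rw [Complex.betaIntegral, ← intervalIntegral.integral_ofReal]
    apply intervalIntegral.integral_congr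
    intro t ht
    rw [Set.uIcc_of_le (by norm_num : (0:ℝ) ≤ 1)] at ht
    show (t:ℂ) ^ ((p:ℂ) - 1) * (1 - (t:ℂ)) ^ ((q:ℂ) - 1)
      = ((t ^ (p-1) * (1-t) ^ (q-1) : ℝ) : ℂ)
    rw [Complex.ofReal_mul, Complex.ofReal_cpow ht.1 (p-1),
      Complex.ofReal_cpow (by linarith [ht.2] : (0:ℝ) ≤ 1 - t) (q-1)]
    push_cast
    ring
  rw [hB, ← Complex.ofReal_add, Complex.Gamma_ofReal, Complex.Gamma_ofReal,
    Complex.Gamma_ofReal, ← Complex.ofReal_mul, ← Complex.ofReal_mul] at h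
  have h' := Complex.ofReal_inj.mp h
  have hΓ : Real.Gamma (p+q) ≠ 0 := (Real.Gamma_pos_of_pos (by linarith)).ne'
  field_simp
  linarith [h']

lemma gamma_ratio {β s : ℝ} (hβ0 : 0 < β) (hβ1 : β < 1) (hs : 1 ≤ s) :
    Real.Gamma s * s ^ β ≤ 2 * Real.Gamma (s + β) := by
  have hs0 : (0:ℝ) < s := by linarith
  have hsβ : (0:ℝ) < s + β := by linarith
  have hconv := Real.convexOn_log_Gamma.2 (Set.mem_Ioi.mpr hsβ)
    (Set.mem_Ioi.mpr (by linarith : (0:ℝ) < s + β + 1)) hβ0.le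
    (by linarith : (0:ℝ) ≤ 1 - β) (by ring)
  have hcomb : β • (s+β) + (1-β) • (s+β+1) = s + 1 := by
    simp only [smul_eq_mul]; ring
  rw [hcomb] at hconv
  simp only [Function.comp, smul_eq_mul] at hconv
  -- hconv : log Γ(s+1) ≤ β * log Γ(s+β) + (1-β) * log Γ(s+β+1)
  have hΓβ : 0 < Real.Gamma (s+β) := Real.Gamma_pos_of_pos hsβ
  have hΓ1 : Real.Gamma (s+β+1) = (s+β) * Real.Gamma (s+β) := by
    rw [Real.Gamma_add_one hsβ.ne']
  have hlog1 : Real.log (Real.Gamma (s+β+1)) = Real.log (s+β) + Real.log (Real.Gamma (s+β)) := by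
    rw [hΓ1, Real.log_mul hsβ.ne' hΓβ.ne']
  have hle : Real.log (Real.Gamma (s+1))
      ≤ Real.log (Real.Gamma (s+β) * (s+β) ^ (1-β)) := by
    rw [Real.log_mul hΓβ.ne' (Real.rpow_pos_of_pos hsβ (1-β)).ne', Real.log_rpow hsβ]
    calc Real.log (Real.Gamma (s+1))
        ≤ β * Real.log (Real.Gamma (s+β)) + (1-β) * Real.log (Real.Gamma (s+β+1)) := hconv
      _ = Real.log (Real.Gamma (s+β)) + (1-β) * Real.log (s+β) := by rw [hlog1]; ring
  have hmain : Real.Gamma (s+1) ≤ Real.Gamma (s+β) * (s+β) ^ (1-β) := by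
    have := Real.exp_le_exp.mpr hle
    rwa [Real.exp_log (Real.Gamma_pos_of_pos (by linarith)),
      Real.exp_log (by positivity)] at this
  -- now Γ s * s * s^β = Γ(s+1) * s^β ≤ Γ(s+β) * (s+β)^(1-β) * s^β ≤ Γ(s+β)*(s+β) ≤ 2 s Γ(s+β)
  have hΓs1 : Real.Gamma (s+1) = s * Real.Gamma s := Real.Gamma_add_one hs0.ne'
  have h2 : (s+β) ^ (1-β) * s ^ β ≤ s + β := by
    calc (s+β) ^ (1-β) * s ^ β ≤ (s+β) ^ (1-β) * (s+β) ^ β := by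
          apply mul_le_mul_of_nonneg_left (Real.rpow_le_rpow hs0.le (by linarith) hβ0.le)
            (Real.rpow_nonneg hsβ.le _)
      _ = (s+β) ^ ((1-β) + β) := (Real.rpow_add hsβ _ _).symm
      _ = s + β := by norm_num
  have h3 : s * (Real.Gamma s * s ^ β) ≤ Real.Gamma (s+β) * (s+β) := by
    calc s * (Real.Gamma s * s ^ β) = Real.Gamma (s+1) * s ^ β := by rw [hΓs1]; ring
      _ ≤ Real.Gamma (s+β) * (s+β) ^ (1-β) * s ^ β :=
          mul_le_mul_of_nonneg_right hmain (Real.rpow_nonneg hs0.le _)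
      _ = Real.Gamma (s+β) * ((s+β) ^ (1-β) * s ^ β) := by ring
      _ ≤ Real.Gamma (s+β) * (s+β) := mul_le_mul_of_nonneg_left h2 hΓβ.le
  have h4 : Real.Gamma (s+β) * (s+β) ≤ s * (2 * Real.Gamma (s+β)) := by nlinarith
  have := h3.trans h4
  exact le_of_mul_le_mul_left this hs0




lemma summable_ML {β x : ℝ} (hβ0 : 0 < β) (hβ1 : β < 1) (hx : 0 < x) :
    Summable (fun k : ℕ => x ^ k / Real.Gamma (β * k + 1)) := by
  apply summable_of_ratio_norm_eventually_le (r := 1/2) (by norm_num)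
  rw [eventually_atTop]
  set C := max 1 (4*x) with hC
  have hC1 : (1:ℝ) ≤ C := le_max_left _ _
  have hC0 : (0:ℝ) < C := by linarith
  refine ⟨⌈C ^ (1/β) / β⌉₊, fun k hk => ?_⟩
  set s := β * k + 1 with hs
  have hs1 : (1:ℝ) ≤ s := by
    have : (0:ℝ) ≤ β * k := by positivity
    simp [hs]; linarith
  have hs0 : (0:ℝ) < s := by linarith
  have hkC : C ^ (1/β) ≤ s := by
    have h1 : C ^ (1/β) / β ≤ (k:ℝ) := by
      calc C ^ (1/β) / β ≤ (⌈C ^ (1/β) / β⌉₊ : ℝ) := Nat.le_ceil _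
        _ ≤ (k:ℝ) := Nat.cast_le.mpr hk
    have := (div_le_iff₀ hβ0).mp h1
    rw [hs]; linarith [mul_comm β (k:ℝ)]
  have hsC : (4*x) ≤ s ^ β := by
    have h1 : C = (C ^ (1/β)) ^ β := by
      rw [← Real.rpow_mul hC0.le, one_div_mul_cancel hβ0.ne', Real.rpow_one]
    calc (4*x) ≤ C := le_max_right _ _
      _ = (C ^ (1/β)) ^ β := h1
      _ ≤ s ^ β := Real.rpow_le_rpow (Real.rpow_nonneg hC0.le _) hkC hβ0.le
  have hΓs : 0 < Real.Gamma s := Real.Gamma_pos_of_pos hs0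
  have hΓsβ : 0 < Real.Gamma (s + β) := Real.Gamma_pos_of_pos (by linarith)
  have hkey : 2 * x * Real.Gamma s ≤ Real.Gamma (s + β) := by
    have h2 := gamma_ratio hβ0 hβ1 hs1
    have h3 : Real.Gamma s * (4*x) ≤ Real.Gamma s * s ^ β :=
      mul_le_mul_of_nonneg_left hsC hΓs.le
    nlinarith
  have hcast : β * ((k:ℕ)+1 : ℕ) + 1 = s + β := by push_cast [hs]; ring
  have hpos1 : (0:ℝ) < x ^ k / Real.Gamma s := by positivity
  rw [Real.norm_eq_abs, Real.norm_eq_abs, hcast, abs_of_pos (by positivity),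
    abs_of_pos (by positivity : (0:ℝ) < x ^ k / Real.Gamma (β * k + 1))]
  rw [← hs]
  rw [div_le_iff₀ hΓsβ, pow_succ]
  calc x ^ k * x = 1/2 * (x ^ k / Real.Gamma s) * (2 * x * Real.Gamma s) := by
        field_simp
    _ ≤ 1/2 * (x ^ k / Real.Gamma s) * Real.Gamma (s+β) :=
        mul_le_mul_of_nonneg_left hkey (by positivity)




lemma sum_kernel {β γ : ℝ} (hβ0 : 0 < β) (hβ1 : β < 1) (hγ : 0 ≤ γ) {n : ℕ} (hn : 2 ≤ n) :
    ∑ i ∈ Finset.Ico 1 n, ((n:ℝ) - (i:ℝ)) ^ (β-1) * (i:ℝ) ^ γ ≤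
      Real.Gamma (γ+1) * Real.Gamma β / Real.Gamma (γ+1+β) * (n:ℝ) ^ (β+γ) := by
  have hn2 : (2:ℝ) ≤ (n:ℝ) := by exact_mod_cast hn
  have hn0 : (0:ℝ) < n := by linarith
  set f : ℝ → ℝ := fun t => ((n:ℝ) - t) ^ (β-1) * t ^ γ with hf
  obtain ⟨m, rfl⟩ : ∃ m, n = m + 1 := ⟨n - 1, by omega⟩
  have hm1 : 1 ≤ m := by omega
  have hmr : (1:ℝ) ≤ (m:ℝ) := by exact_mod_cast hm1
  have hmcast : ((m+1:ℕ):ℝ) - 1 = (m:ℝ) := by push_cast; ring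
  have hmn : (m:ℝ) < ((m+1:ℕ):ℝ) := by push_cast; linarith
  -- monotonicity on [1, m]
  have hmono : MonotoneOn f (Set.Icc (1:ℝ) (m:ℝ)) := by
    intro s hs t ht hst
    have h1 : (0:ℝ) < ((m+1:ℕ):ℝ) - t := by
      have := ht.2; push_cast; linarith
    have h0s : (0:ℝ) ≤ s := by linarith [hs.1]
    apply mul_le_mul
    · exact Real.rpow_le_rpow_of_nonpos h1 (by linarith) (by linarith)
    · exact Real.rpow_le_rpow h0s hst hγ
    · exact Real.rpow_nonneg h0s _
    · exact Real.rpow_nonneg (by linarith : (0:ℝ) ≤ ((m+1:ℕ):ℝ) - t) _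
  -- integrability on [m, m+1]
  have hbase : IntervalIntegrable (fun t:ℝ => (((m+1:ℕ):ℝ) - t) ^ (β-1)) volume (m:ℝ) ((m+1:ℕ):ℝ) := by
    have h := (intervalIntegral.intervalIntegrable_rpow' (a := (0:ℝ)) (b := 1)
      (show (-1:ℝ) < β - 1 by linarith)).comp_sub_left ((m+1:ℕ):ℝ)
    have e1 : ((m+1:ℕ):ℝ) - 1 = (m:ℝ) := hmcast
    have e0 : ((m+1:ℕ):ℝ) - 0 = ((m+1:ℕ):ℝ) := by ring
    rw [e0, e1] at h
    exact h.symm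
  have hmeas : Measurable f := by rw [hf]; fun_prop
  have hint2 : IntervalIntegrable f volume (m:ℝ) ((m+1:ℕ):ℝ) := by
    apply (hbase.mul_const (((m+1:ℕ):ℝ) ^ γ)).mono_fun hmeas.aestronglyMeasurable
    filter_upwards [MeasureTheory.ae_restrict_mem measurableSet_uIoc] with t ht
    rw [Set.uIoc_of_le hmn.le] at ht
    have ht1 : (0:ℝ) < t := by linarith [ht.1]
    have ht2 : (0:ℝ) ≤ ((m+1:ℕ):ℝ) - t := by linarith [ht.2]
    have hfnn : 0 ≤ f t := by
      simp only [hf]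
      exact mul_nonneg (Real.rpow_nonneg ht2 _) (Real.rpow_nonneg ht1.le _)
    rw [Real.norm_eq_abs, Real.norm_eq_abs, abs_of_nonneg hfnn, abs_of_nonneg
      (mul_nonneg (Real.rpow_nonneg ht2 _) (Real.rpow_nonneg (by positivity) _))]
    simp only [hf]
    exact mul_le_mul_of_nonneg_left (Real.rpow_le_rpow ht1.le ht.2 hγ)
      (Real.rpow_nonneg ht2 _)
  have hfm : f (m:ℝ) = (m:ℝ) ^ γ := by
    simp only [hf]
    rw [show ((m+1:ℕ):ℝ) - (m:ℝ) = 1 by push_cast; ring, Real.one_rpow, one_mul]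
  have hcomp : ∫ x in (m:ℝ)..((m+1:ℕ):ℝ), (((m+1:ℕ):ℝ) - x) ^ (β-1) = 1/β := by
    rw [intervalIntegral.integral_comp_sub_left (fun u : ℝ => u ^ (β-1)) ((m+1:ℕ):ℝ)]
    rw [show ((m+1:ℕ):ℝ) - ((m+1:ℕ):ℝ) = 0 by ring,
      show ((m+1:ℕ):ℝ) - (m:ℝ) = 1 by push_cast; ring]
    rw [integral_rpow (Or.inl (by linarith : (-1:ℝ) < β-1))]
    rw [show β - 1 + 1 = β by ring, Real.one_rpow, Real.zero_rpow hβ0.ne']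
    norm_num
  have hlast : f (m:ℝ) ≤ ∫ x in (m:ℝ)..((m+1:ℕ):ℝ), f x := by
    have hintc : IntervalIntegrable (fun t:ℝ => (((m+1:ℕ):ℝ) - t) ^ (β-1) * (m:ℝ) ^ γ)
        volume (m:ℝ) ((m+1:ℕ):ℝ) := hbase.mul_const _
    have hmon2 : ∫ x in (m:ℝ)..((m+1:ℕ):ℝ), (((m+1:ℕ):ℝ) - x) ^ (β-1) * (m:ℝ) ^ γ
        ≤ ∫ x in (m:ℝ)..((m+1:ℕ):ℝ), f x := by
      apply intervalIntegral.integral_mono_on hmn.le hintc hint2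
      intro t ht
      simp only [hf]
      exact mul_le_mul_of_nonneg_left
        (Real.rpow_le_rpow (by linarith : (0:ℝ) ≤ (m:ℝ)) ht.1 hγ)
        (Real.rpow_nonneg (by linarith [ht.2]) _)
    have heval : ∫ x in (m:ℝ)..((m+1:ℕ):ℝ), (((m+1:ℕ):ℝ) - x) ^ (β-1) * (m:ℝ) ^ γ
        = 1/β * (m:ℝ) ^ γ := by
      rw [intervalIntegral.integral_mul_const, hcomp]
    rw [hfm]
    have h1β : (1:ℝ) ≤ 1/β := by rw [le_div_iff₀ hβ0]; linarith
    nlinarith [Real.rpow_nonneg (by linarith : (0:ℝ) ≤ (m:ℝ)) γ]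
  have hint1 : IntervalIntegrable f volume 1 (m:ℝ) := by
    apply MonotoneOn.intervalIntegrable
    rwa [Set.uIcc_of_le hmr]
  have hsum1 : ∑ i ∈ Finset.Ico 1 m, f (i:ℝ) ≤ ∫ x in (1:ℝ)..(m:ℝ), f x := by
    have h := MonotoneOn.sum_le_integral_Ico hm1 (f := f) (by rwa [Nat.cast_one])
    rwa [Nat.cast_one] at h
  have hadd : (∫ x in (1:ℝ)..(m:ℝ), f x) + ∫ x in (m:ℝ)..((m+1:ℕ):ℝ), f x
      = ∫ x in (1:ℝ)..((m+1:ℕ):ℝ), f x :=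
    intervalIntegral.integral_add_adjacent_intervals hint1 hint2
  have hcont : ContinuousOn f (Set.Icc (0:ℝ) 1) := by
    simp only [hf]
    apply ContinuousOn.mul
    · apply ContinuousOn.rpow_const ((continuous_const.sub continuous_id).continuousOn)
      intro t ht
      exact Or.inl (by have := ht.2; intro hc; simp at hc; linarith)
    · exact continuousOn_id.rpow_const fun t ht => Or.inr hγ
  have hint0 : IntervalIntegrable f volume 0 1 := by
    have he : Set.uIcc (0:ℝ) 1 = Set.Icc 0 1 := Set.uIcc_of_le (by norm_num)
    exact (he ▸ hcont).intervalIntegrable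
  have hnn01 : 0 ≤ ∫ x in (0:ℝ)..1, f x := by
    apply intervalIntegral.integral_nonneg (by norm_num)
    intro u hu
    simp only [hf]
    exact mul_nonneg (Real.rpow_nonneg (by linarith [hu.2] : (0:ℝ) ≤ ((m+1:ℕ):ℝ) - u) _)
      (Real.rpow_nonneg hu.1 _)
  have hintall : IntervalIntegrable f volume 1 ((m+1:ℕ):ℝ) := hint1.trans hint2
  have h1n : ∫ x in (1:ℝ)..((m+1:ℕ):ℝ), f x ≤ ∫ x in (0:ℝ)..((m+1:ℕ):ℝ), f x := by
    rw [← intervalIntegral.integral_add_adjacent_intervals hint0 hintall]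
    linarith
  have hval : ∫ x in (0:ℝ)..((m+1:ℕ):ℝ), f x
      = Real.Gamma (γ+1) * Real.Gamma β / Real.Gamma (γ+1+β) * ((m+1:ℕ):ℝ) ^ (β+γ) := by
    set c : ℝ := ((m+1:ℕ):ℝ) with hcdef
    have hc0 : (0:ℝ) < c := hn0
    have hsub := intervalIntegral.integral_comp_mul_left f (a := (0:ℝ)) (b := 1) hc0.ne'
    rw [mul_zero, mul_one, smul_eq_mul] at hsub
    have hcong : ∫ u in (0:ℝ)..1, f (c*u)
        = (c ^ (β-1) * c ^ γ) * ∫ u in (0:ℝ)..1, u ^ ((γ+1)-1) * (1-u) ^ (β-1) := by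
      rw [← intervalIntegral.integral_const_mul]
      apply intervalIntegral.integral_congr
      intro u hu
      rw [Set.uIcc_of_le (by norm_num : (0:ℝ) ≤ 1)] at hu
      have h1u : (0:ℝ) ≤ 1 - u := by linarith [hu.2]
      simp only [hf]
      rw [show c - c*u = c*(1-u) by ring, Real.mul_rpow hc0.le h1u,
        Real.mul_rpow hc0.le hu.1, show (γ+1)-1 = γ by ring]
      ring
    rw [realBeta (by linarith : (0:ℝ) < γ+1) hβ0] at hcong
    have hflip : ∫ x in (0:ℝ)..c, f x = c * ∫ u in (0:ℝ)..1, f (c*u) := by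
      rw [hsub]; field_simp
    have h2 : c * c ^ (β-1+γ) = c ^ (β+γ) := by
      rw [mul_comm, ← Real.rpow_add_one hc0.ne', show β-1+γ+1 = β+γ by ring]
    rw [hflip, hcong]
    rw [show c * (c ^ (β-1) * c ^ γ * (Real.Gamma (γ+1) * Real.Gamma β / Real.Gamma (γ+1+β)))
      = Real.Gamma (γ+1) * Real.Gamma β / Real.Gamma (γ+1+β) * (c * (c^(β-1) * c^γ)) by ring]
    rw [← Real.rpow_add hc0, h2]
  have hgoal : ∑ i ∈ Finset.Ico 1 (m+1), (((m+1:ℕ):ℝ) - (i:ℝ)) ^ (β-1) * (i:ℝ) ^ γ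
      = (∑ i ∈ Finset.Ico 1 m, f (i:ℝ)) + f (m:ℝ) := by
    simp only [hf]
    exact Finset.sum_Ico_succ_top hm1 _
  rw [hgoal]
  calc (∑ i ∈ Finset.Ico 1 m, f (i:ℝ)) + f (m:ℝ)
      ≤ (∫ x in (1:ℝ)..(m:ℝ), f x) + ∫ x in (m:ℝ)..((m+1:ℕ):ℝ), f x := add_le_add hsum1 hlast
    _ = ∫ x in (1:ℝ)..((m+1:ℕ):ℝ), f x := hadd
    _ ≤ ∫ x in (0:ℝ)..((m+1:ℕ):ℝ), f x := h1n
    _ = _ := hval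




theorem stmt_2 (N : ℕ) (hN : 1 ≤ N) (β QA : ℝ) (hβ0 : 0 < β) (hβ1 : β < 1)
    (hQA : 0 < QA) (z y : ℕ → ℝ)
    (hz : ∀ n, 1 ≤ n → n ≤ N → 0 ≤ z n)
    (hy : ∀ n, 1 ≤ n → n ≤ N → 0 ≤ y n)
    (hymono : ∀ i j, 1 ≤ i → i ≤ j → j ≤ N → y i ≤ y j)
    (hbound : ∀ n, 1 ≤ n → n ≤ N →
      z n ≤ QA / (N : ℝ) ^ β * ∑ i ∈ Finset.Ico 1 n, z i / ((n - i : ℕ) : ℝ) ^ (1 - β)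
        + y n) :
    ∀ n, 1 ≤ n → n ≤ N →
      z n ≤ y n * (1 + ∑' k : ℕ, (QA * Real.Gamma β) ^ k / Real.Gamma (β * k + 1)) := by
  have hΓβ : 0 < Real.Gamma β := Real.Gamma_pos_of_pos hβ0
  set x := QA * Real.Gamma β with hxdef
  have hx : 0 < x := mul_pos hQA hΓβ
  set a : ℕ → ℝ := fun k => x ^ k / Real.Gamma (β * k + 1) with hadef
  have hΓpos : ∀ k : ℕ, 0 < Real.Gamma (β * k + 1) := fun k =>
    Real.Gamma_pos_of_pos (by positivity)
  have hapos : ∀ k, 0 < a k := fun k => div_pos (pow_pos hx k) (hΓpos k)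
  have hsum : Summable a := summable_ML hβ0 hβ1 hx
  have hNpos : (0:ℝ) < N := by exact_mod_cast Nat.lt_of_lt_of_le Nat.zero_lt_one hN
  set w : ℕ → ℝ := fun m => ∑ k ∈ Finset.range m, a k * ((m:ℝ)/N) ^ (β * k) with hwdef
  have hterm_nonneg : ∀ m k : ℕ, 0 ≤ a k * ((m:ℝ)/N) ^ (β*k) := fun m k =>
    mul_nonneg (hapos k).le (Real.rpow_nonneg (by positivity) _)
  have hwnonneg : ∀ m, 0 ≤ w m := fun m => Finset.sum_nonneg fun k _ => hterm_nonneg m k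
  have key : ∀ n, 1 ≤ n → n ≤ N → z n ≤ y n * w n := by
    intro n
    induction n using Nat.strong_induction_on with
    | _ n ih =>
      intro h1 hnN
      have hyn : 0 ≤ y n := hy n h1 hnN
      have hSz : ∑ i ∈ Finset.Ico 1 n, z i / ((n - i : ℕ) : ℝ) ^ (1-β)
          ≤ y n * ∑ i ∈ Finset.Ico 1 n, ((n:ℝ) - (i:ℝ)) ^ (β-1) * w i := by
        rw [Finset.mul_sum]
        apply Finset.sum_le_sum
        intro i hi
        rw [Finset.mem_Ico] at hi
        have hiN : i ≤ N := le_trans (Nat.le_of_lt hi.2) hnN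
        have hcast : ((n - i : ℕ) : ℝ) = (n:ℝ) - (i:ℝ) := by
          rw [Nat.cast_sub (Nat.le_of_lt hi.2)]
        have hpos : (0:ℝ) < (n:ℝ) - (i:ℝ) := by
          have : (i:ℝ) < (n:ℝ) := by exact_mod_cast hi.2
          linarith
        have hz_le : z i ≤ y n * w i :=
          calc z i ≤ y i * w i := ih i hi.2 hi.1 hiN
            _ ≤ y n * w i := mul_le_mul_of_nonneg_right
                (hymono i n hi.1 (Nat.le_of_lt hi.2) hnN) (hwnonneg i)
        calc z i / ((n - i : ℕ) : ℝ) ^ (1-β) = z i * ((n:ℝ) - (i:ℝ)) ^ (β-1) := by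
              rw [hcast, show β - 1 = -(1-β) by ring, Real.rpow_neg hpos.le, div_eq_mul_inv]
          _ ≤ (y n * w i) * ((n:ℝ) - (i:ℝ)) ^ (β-1) :=
              mul_le_mul_of_nonneg_right hz_le (Real.rpow_nonneg hpos.le _)
          _ = y n * (((n:ℝ) - (i:ℝ)) ^ (β-1) * w i) := by ring
      have hcore : QA / (N:ℝ)^β * ∑ i ∈ Finset.Ico 1 n, ((n:ℝ) - (i:ℝ)) ^ (β-1) * w i
          ≤ w n - 1 := by
        have hQN : (0:ℝ) ≤ QA / (N:ℝ)^β := by positivity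
        have hstep1 : ∑ i ∈ Finset.Ico 1 n, ((n:ℝ) - (i:ℝ)) ^ (β-1) * w i
            ≤ ∑ k ∈ Finset.range (n-1), (a k / (N:ℝ)^(β*k)) *
                ∑ i ∈ Finset.Ico 1 n, ((n:ℝ) - (i:ℝ)) ^ (β-1) * (i:ℝ)^(β*k) := by
          calc ∑ i ∈ Finset.Ico 1 n, ((n:ℝ) - (i:ℝ)) ^ (β-1) * w i
              ≤ ∑ i ∈ Finset.Ico 1 n, ((n:ℝ) - (i:ℝ)) ^ (β-1) *
                  (∑ k ∈ Finset.range (n-1), a k * ((i:ℝ)/N) ^ (β*k)) := by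
                apply Finset.sum_le_sum
                intro i hi
                rw [Finset.mem_Ico] at hi
                have hile : (i:ℝ) ≤ (n:ℝ) := by exact_mod_cast Nat.le_of_lt hi.2
                apply mul_le_mul_of_nonneg_left _ (Real.rpow_nonneg (by linarith) _)
                apply Finset.sum_le_sum_of_subset_of_nonneg
                · exact Finset.range_subset_range.mpr (by omega)
                · intro k _ _; exact hterm_nonneg i k
            _ = ∑ k ∈ Finset.range (n-1), ∑ i ∈ Finset.Ico 1 n,
                  ((n:ℝ) - (i:ℝ)) ^ (β-1) * (a k * ((i:ℝ)/N) ^ (β*k)) := by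
                simp_rw [Finset.mul_sum]
                exact Finset.sum_comm
            _ = ∑ k ∈ Finset.range (n-1), (a k / (N:ℝ)^(β*k)) *
                  ∑ i ∈ Finset.Ico 1 n, ((n:ℝ) - (i:ℝ)) ^ (β-1) * (i:ℝ)^(β*k) := by
                apply Finset.sum_congr rfl
                intro k _
                rw [Finset.mul_sum]
                apply Finset.sum_congr rfl
                intro i hi
                rw [Real.div_rpow (Nat.cast_nonneg i) hNpos.le]
                ring
        have hstep2 : ∑ k ∈ Finset.range (n-1), (a k / (N:ℝ)^(β*k)) *
              ∑ i ∈ Finset.Ico 1 n, ((n:ℝ) - (i:ℝ)) ^ (β-1) * (i:ℝ)^(β*k)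
            ≤ ∑ k ∈ Finset.range (n-1), (a k / (N:ℝ)^(β*k)) *
              (Real.Gamma (β*k+1) * Real.Gamma β / Real.Gamma (β*k+1+β) * (n:ℝ)^(β+β*k)) := by
          apply Finset.sum_le_sum
          intro k hk
          rw [Finset.mem_range] at hk
          have hn2 : 2 ≤ n := by omega
          exact mul_le_mul_of_nonneg_left (sum_kernel hβ0 hβ1 (by positivity) hn2)
            (by positivity)
        have hterm_eq : ∀ k : ℕ, QA / (N:ℝ)^β * ((a k / (N:ℝ)^(β*k)) *
              (Real.Gamma (β*k+1) * Real.Gamma β / Real.Gamma (β*k+1+β) * (n:ℝ)^(β+β*k)))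
            = a (k+1) * ((n:ℝ)/N)^(β*((k+1:ℕ):ℝ)) := by
          intro k
          have hΓ1 := (hΓpos k).ne'
          have hΓ2 : Real.Gamma (β*k+1+β) ≠ 0 :=
            (Real.Gamma_pos_of_pos (show (0:ℝ) < β*k+1+β by positivity)).ne'
          have hN1 : ((N:ℝ)^β) ≠ 0 := (Real.rpow_pos_of_pos hNpos β).ne'
          have hN2 : ((N:ℝ)^(β*(k:ℝ))) ≠ 0 := (Real.rpow_pos_of_pos hNpos _).ne'
          simp only [hadef]
          rw [show β * ((k+1:ℕ):ℝ) + 1 = β*k+1+β by push_cast; ring,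
            show β * ((k+1:ℕ):ℝ) = β + β*k by push_cast; ring,
            Real.div_rpow (Nat.cast_nonneg n) hNpos.le,
            Real.rpow_add hNpos β (β*k), pow_succ, hxdef]
          field_simp
        have hsum_shift : ∑ k ∈ Finset.range (n-1), a (k+1) * ((n:ℝ)/N)^(β*((k+1:ℕ):ℝ))
            = w n - 1 := by
          have hw0 : a 0 * ((n:ℝ)/N)^(β*((0:ℕ):ℝ)) = 1 := by
            simp [hadef, Real.Gamma_one]
          have hn1 : n - 1 + 1 = n := by omega
          have hshift := Finset.sum_range_succ' (fun k : ℕ => a k * ((n:ℝ)/N)^(β*(k:ℝ))) (n-1)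
          rw [hn1] at hshift
          simp only [hwdef]
          rw [hshift, hw0]
          push_cast
          ring
        calc QA / (N:ℝ)^β * ∑ i ∈ Finset.Ico 1 n, ((n:ℝ) - (i:ℝ)) ^ (β-1) * w i
            ≤ QA / (N:ℝ)^β * ∑ k ∈ Finset.range (n-1), (a k / (N:ℝ)^(β*k)) *
                (Real.Gamma (β*k+1) * Real.Gamma β / Real.Gamma (β*k+1+β) * (n:ℝ)^(β+β*k)) :=
              mul_le_mul_of_nonneg_left (hstep1.trans hstep2) hQN
          _ = ∑ k ∈ Finset.range (n-1), a (k+1) * ((n:ℝ)/N)^(β*((k+1:ℕ):ℝ)) := by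
              rw [Finset.mul_sum]
              exact Finset.sum_congr rfl fun k _ => hterm_eq k
          _ = w n - 1 := hsum_shift
      calc z n ≤ QA / (N : ℝ) ^ β * ∑ i ∈ Finset.Ico 1 n, z i / ((n - i : ℕ) : ℝ) ^ (1 - β)
            + y n := hbound n h1 hnN
        _ ≤ QA / (N:ℝ)^β * (y n * ∑ i ∈ Finset.Ico 1 n, ((n:ℝ) - (i:ℝ)) ^ (β-1) * w i)
            + y n := by
            have := mul_le_mul_of_nonneg_left hSz (show (0:ℝ) ≤ QA / (N:ℝ)^β by positivity)
            linarith
        _ = y n * (QA / (N:ℝ)^β * ∑ i ∈ Finset.Ico 1 n, ((n:ℝ) - (i:ℝ)) ^ (β-1) * w i)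
            + y n := by ring
        _ ≤ y n * (w n - 1) + y n := by
            have := mul_le_mul_of_nonneg_left hcore hyn
            linarith
        _ = y n * w n := by ring
  intro n h1 hnN
  have hwle : w n ≤ 1 + ∑' k, a k := by
    have hle1 : w n ≤ ∑ k ∈ Finset.range n, a k := by
      apply Finset.sum_le_sum
      intro k _
      have hfrac : ((n:ℝ)/N)^(β*(k:ℝ)) ≤ 1 :=
        Real.rpow_le_one (by positivity)
          (by rw [div_le_one hNpos]; exact_mod_cast hnN) (by positivity)
      calc a k * ((n:ℝ)/N)^(β*(k:ℝ)) ≤ a k * 1 :=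
            mul_le_mul_of_nonneg_left hfrac (hapos k).le
        _ = a k := mul_one _
    have hle2 : ∑ k ∈ Finset.range n, a k ≤ ∑' k, a k :=
      Summable.sum_le_tsum (Finset.range n) (fun k _ => (hapos k).le) hsum
    linarith
  exact (key n h1 hnN).trans (mul_le_mul_of_nonneg_left hwle (hy n h1 hnN))
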